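/- In the static hedging of the vulnerable put in the jump-to-ruin model, the raw pnl is $pnl^d_t = -\mathbf{1}_{\{\nu \le t\}}\mathbf{1}_{\{\nu \le T\}} K$ and the HVA is $\mathrm{HVA}^d_t = \mathbf{1}_{\{t < \nu\}} K (1 - e^{-\lambda(T-t)})$; in particular the compensated loss satisfies $d(pnl^d - \mathrm{HVA}^d)_t = K \mathbf{1}_{\{t \le \nu \wedge T\}} e^{-\lambda(T-t)} (\lambda\,dt - \delta_\nu(dt))$, whose integral is a martingale. -/

import Mathlib

open MeasureTheory

/-- static hedging of the vulnerable put in the jump-to-ruin model. With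
`pnl_t = -1_{ν ≤ T} K 1_{[T,∞)}(t) + 1_{ν ≤ t}(Q_t - P_t)` and `HVA_t = 1_{t<ν}(P_t - Q_t)`,
where `P - Q = 1_{t<ν} K (1 - e^{-λ(T-t)}) + 1_{ν ≤ t} K` before `T` and `P, Q` vanish
from `T` on, one has `pnl_t = -1_{ν ≤ t} 1_{ν ≤ T} K`,
`HVA_t = 1_{t < ν} K (1 - e^{-λ(T-t)})` for `t ≤ T`, and the compensated loss
`X_t = pnl_t - (HVA_t - HVA_0)` (equal to
`K ∫_0^{t ∧ ν ∧ T} λ e^{-λ(T-s)} ds - K e^{-λ(T-ν)} 1_{ν ≤ t ∧ T}`) is a martingale. -/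
theorem static_hedge_pnl_hva_martingale
    {Ω : Type*} {m0 : MeasurableSpace Ω} {μ : Measure Ω} [IsProbabilityMeasure μ]
    (ℱ : Filtration ℝ m0)
    (ν : Ω → ℝ) (hνpos : ∀ ω, 0 < ν ω)
    (lam K T : ℝ) (hlam : 0 < lam) (hK : 0 < K) (hT : 0 < T)
    -- ν is adapted and has the exponential(λ) memoryless conditional survival law
    (hνadapted : ∀ t : ℝ, MeasurableSet[ℱ t] {ω | ν ω ≤ t})
    (hsurv : ∀ t u : ℝ, t ≤ u →
      μ[fun ω => if u < ν ω then (1 : ℝ) else 0 | ℱ t]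
        =ᵐ[μ] fun ω => (if t < ν ω then (1 : ℝ) else 0) * Real.exp (-lam * (u - t)))
    (Q P pnl HVA : ℝ → Ω → ℝ)
    -- vulnerable and vanilla put fair values
    (hQP : ∀ t : ℝ, t < T → ∀ ω, P t ω - Q t ω =
      (if t < ν ω then (1 : ℝ) else 0) * (K * (1 - Real.exp (-lam * (T - t))))
      + (if ν ω ≤ t then (1 : ℝ) else 0) * K)
    (hvanish : ∀ t : ℝ, T ≤ t → ∀ ω, Q t ω = 0 ∧ P t ω = 0)
    -- raw pnl and HVA of the statically hedged vulnerable put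
    (hpnl : ∀ t ω, pnl t ω =
      -(if ν ω ≤ T then (1 : ℝ) else 0) * K * (if T ≤ t then (1 : ℝ) else 0)
      + (if ν ω ≤ t then (1 : ℝ) else 0) * (Q t ω - P t ω))
    (hHVA : ∀ t ω, HVA t ω = (if t < ν ω then (1 : ℝ) else 0) * (P t ω - Q t ω)) :
    -- closed forms of the raw pnl and of the HVA
    (∀ t : ℝ, t ≤ T → ∀ ω,
      pnl t ω = -((if ν ω ≤ t then (1 : ℝ) else 0) * (if ν ω ≤ T then (1 : ℝ) else 0) * K))
    ∧ (∀ t : ℝ, t ≤ T → ∀ ω,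
      HVA t ω = (if t < ν ω then (1 : ℝ) else 0) * (K * (1 - Real.exp (-lam * (T - t)))))
    -- the compensated loss pnl - HVA_{(0)} is a martingale
    ∧ (∀ s t : ℝ, 0 ≤ s → s ≤ t → t ≤ T →
        μ[fun ω => pnl t ω - (HVA t ω - HVA 0 ω) | ℱ s]
          =ᵐ[μ] fun ω => pnl s ω - (HVA s ω - HVA 0 ω)) := by
  have hpart1 : ∀ t : ℝ, t ≤ T → ∀ ω,
      pnl t ω = -((if ν ω ≤ t then (1 : ℝ) else 0) * (if ν ω ≤ T then (1 : ℝ) else 0) * K) := by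
    intro t ht ω
    rcases lt_or_eq_of_le ht with hlt | rfl
    · rw [hpnl]
      have hq := hQP t hlt ω
      have hQt : Q t ω - P t ω = -(P t ω - Q t ω) := by ring
      by_cases hν : ν ω ≤ t
      · have hνT : ν ω ≤ T := hν.trans ht
        simp [hQt, hq, hν, hνT, not_lt.2 hν, not_le.2 hlt]
      · simp [hQt, hq, hν, not_le.2 hlt]
    · rw [hpnl]
      obtain ⟨hQ0, hP0⟩ := hvanish t le_rfl ω
      by_cases hν : ν ω ≤ t
      · simp [hQ0, hP0, hν]
      · simp [hQ0, hP0, hν]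
  have hpart2 : ∀ t : ℝ, t ≤ T → ∀ ω,
      HVA t ω = (if t < ν ω then (1 : ℝ) else 0) * (K * (1 - Real.exp (-lam * (T - t)))) := by
    intro t ht ω
    rcases lt_or_eq_of_le ht with hlt | rfl
    · rw [hHVA, hQP t hlt ω]
      by_cases hν : t < ν ω
      · simp [hν, not_le.2 hν]
      · simp [hν]
    · obtain ⟨hQ0, hP0⟩ := hvanish t le_rfl ω
      rw [hHVA]
      simp [hQ0, hP0]
  refine ⟨hpart1, hpart2, ?_⟩
  intro s t hs hst htT
  set f : ℝ → Ω → ℝ := fun r ω => if r < ν ω then (1 : ℝ) else 0 with hf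
  have hmeas : ∀ r : ℝ, MeasurableSet {ω | r < ν ω} := by
    intro r
    have : MeasurableSet[m0] {ω | ν ω ≤ r} := ℱ.le r _ (hνadapted r)
    have h2 := this.compl
    convert h2 using 1
    ext ω; simp [not_le]
  have hint : ∀ r : ℝ, Integrable (f r) μ := by
    intro r
    have : f r = Set.indicator {ω | r < ν ω} (fun _ => (1 : ℝ)) := by
      funext ω; simp [hf, Set.indicator_apply]
    rw [this]
    exact (integrable_const 1).indicator (hmeas r)
  -- closed form of the compensated loss
  have hX : ∀ r : ℝ, 0 ≤ r → r ≤ T → ∀ ω,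
      pnl r ω - (HVA r ω - HVA 0 ω)
        = (K * Real.exp (-lam * (T - r))) * f r ω - K * Real.exp (-lam * T) := by
    intro r hr hrT ω
    rw [hpart1 r hrT ω, hpart2 r hrT ω, hpart2 0 hT.le ω]
    have h0 : (0 : ℝ) < ν ω := hνpos ω
    by_cases hν : ν ω ≤ r
    · have hνT : ν ω ≤ T := hν.trans hrT
      simp [hf, hν, hνT, not_lt.2 hν, h0]
      ring
    · simp [hf, hν, not_le.1 hν, h0]
      ring
  have hXt : (fun ω => pnl t ω - (HVA t ω - HVA 0 ω))
      = fun ω => (K * Real.exp (-lam * (T - t))) • f t ω - K * Real.exp (-lam * T) := by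
    funext ω; simpa using hX t (hs.trans hst) htT ω
  rw [hXt]
  set c : ℝ := K * Real.exp (-lam * (T - t)) with hc
  set d : ℝ := K * Real.exp (-lam * T) with hd
  have hsub : (fun ω => c • f t ω - d) = (c • f t) - (fun _ => d) := by
    funext ω; simp
  rw [hsub]
  have h1 : μ[(c • f t) - (fun _ => d) | ℱ s]
      =ᵐ[μ] μ[c • f t | ℱ s] - μ[(fun _ => d) | ℱ s] :=
    condExp_sub ((hint t).smul c) (integrable_const d) (ℱ s)
  have h2 : μ[c • f t | ℱ s] =ᵐ[μ] c • μ[f t | ℱ s] := condExp_smul c (f t) (ℱ s)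
  have h3 : μ[(fun _ => d) | ℱ s] = fun _ => d := condExp_const (ℱ.le s) d
  have h4 : μ[f t | ℱ s]
      =ᵐ[μ] fun ω => (if s < ν ω then (1 : ℝ) else 0) * Real.exp (-lam * (t - s)) :=
    hsurv s t hst
  refine h1.trans ?_
  rw [h3]
  filter_upwards [h2, h4] with ω hω2 hω4
  simp only [Pi.sub_apply, hω2, Pi.smul_apply, smul_eq_mul, hω4]
  rw [hX s hs (hst.trans htT) ω]
  simp only [hf, hc, hd, smul_eq_mul]
  by_cases hsν : s < ν ω
  · simp only [hsν, if_true, mul_one]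
    rw [show c * (1 * Real.exp (-lam * (t - s))) = K * Real.exp (-lam * (T - t) + -lam * (t - s)) by
      rw [Real.exp_add]; ring]
    ring_nf
  · simp [hsν]
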